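/- Let (A, α, ℤ₊^d) be a C*-dynamical system and let I ⊆ A be a closed two-sided ideal with α_j(I) ⊆ I for all j ∈ [d]. Then for every nonempty F ⊆ [d], (⋂_{i∈F} α_i^{-1}(I)) ∩ {a ∈ A : a·(⋂_{i∈F} α_i^{-1}(I)) ⊆ I} = I. (This is the specialisation to C*-dynamical systems of the identity X_F^{-1}(I) ∩ J_F(I, X) = I, item (iii) of the paper's Proposition 3.8, using that closed two-sided ideals of a C*-algebra are self-adjoint and hereditary.) -/
import Mathlib

set_option maxHeartbeats 1000000

/-- `I` is a two-sided ideal of the (possibly non-unital) ring `A`. -/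
def IsTwoSidedIdealSet {A : Type*} [NonUnitalNonAssocRing A] (I : Set A) : Prop :=
  (0 : A) ∈ I ∧ (∀ x ∈ I, ∀ y ∈ I, x + y ∈ I) ∧ (∀ x ∈ I, -x ∈ I) ∧
    (∀ a : A, ∀ x ∈ I, a * x ∈ I) ∧ (∀ a : A, ∀ x ∈ I, x * a ∈ I)


/-- Key analytic fact: a closed two-sided (ring-theoretic) ideal of a non-unital C*-algebra
satisfies: `a * star a ∈ I → a ∈ I`. -/
lemma closed_ideal_hereditary' {A : Type*} [NonUnitalCStarAlgebra A]
    (I : Set A) (hClosed : IsClosed I)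
    (hleft : ∀ a : A, ∀ x ∈ I, a * x ∈ I) (hright : ∀ a : A, ∀ x ∈ I, x * a ∈ I)
    {a : A} (h : a * star a ∈ I) : a ∈ I := by
  set b := a * star a with hb
  have hbsa : IsSelfAdjoint b := by
    simp [hb, IsSelfAdjoint, star_mul, star_star]
  rw [← hClosed.closure_eq, Metric.mem_closure_iff]
  intro ε hε
  set t : ℝ := (ε ^ 2 / 2) ^ 2 with htdef
  have ht : (0 : ℝ) < t := by positivity
  have htsqrt : Real.sqrt t = ε ^ 2 / 2 := Real.sqrt_sq (by positivity)
  set g : ℝ → ℝ := fun y => y ^ 2 / (y ^ 2 + t) with hgdef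
  have hgcont : Continuous g := by
    apply Continuous.div (by fun_prop) (by fun_prop)
    intro y; positivity
  have hgC : ContinuousOn g (quasispectrum ℝ b) := hgcont.continuousOn
  have hg0 : g 0 = 0 := by simp [hgdef]
  have hidC : ContinuousOn (fun y : ℝ => y) (quasispectrum ℝ b) := continuousOn_id
  set u : A := cfcₙ g b with hu
  -- `u ∈ I`, since `u = b * w` with `b ∈ I`.
  have hwcont : Continuous (fun y : ℝ => y / (y ^ 2 + t)) := by
    apply Continuous.div (by fun_prop) (by fun_prop)
    intro y; positivity
  have hu_mem : u ∈ I := by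
    have h1 : g = fun y : ℝ => y * (y / (y ^ 2 + t)) := funext fun y => by
      rw [hgdef]; ring
    have h2 : u = b * cfcₙ (fun y : ℝ => y / (y ^ 2 + t)) b := by
      rw [hu, h1, cfcₙ_mul (fun y : ℝ => y) (fun y : ℝ => y / (y ^ 2 + t)) b hidC rfl
        hwcont.continuousOn (by simp), cfcₙ_id' ℝ b hbsa]
    rw [h2]
    exact hright _ b h
  -- the approximation estimate
  have husa : star u = u := (IsSelfAdjoint.cfcₙ (f := g) (a := b)).star_eq
  set x := a - u * a with hx
  have hxs : x * star x = (b - b * u) - (u * b - u * (b * u)) := by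
    rw [hx, hb]
    simp only [star_sub, star_mul, husa, star_star]
    noncomm_ring
  -- rewrite everything with cfcₙ
  have h1 : cfcₙ (fun y : ℝ => y * g y) b = b * u := by
    rw [cfcₙ_mul (fun y : ℝ => y) g b hidC rfl hgC hg0, cfcₙ_id' ℝ b hbsa]
  have h2 : cfcₙ (fun y : ℝ => g y * y) b = u * b := by
    rw [cfcₙ_mul g (fun y : ℝ => y) b hgC hg0 hidC rfl, cfcₙ_id' ℝ b hbsa]
  have h3 : cfcₙ (fun y : ℝ => g y * (y * g y)) b = u * (b * u) := by
    rw [cfcₙ_mul g (fun y : ℝ => y * g y) b hgC hg0 (hidC.mul hgC) (by simp [hg0]), h1]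
  have h4 : cfcₙ (fun y : ℝ => y - y * g y) b = b - b * u := by
    rw [cfcₙ_sub (fun y : ℝ => y) (fun y : ℝ => y * g y) b hidC rfl (hidC.mul hgC)
      (by simp [hg0]), cfcₙ_id' ℝ b hbsa, h1]
  have h5 : cfcₙ (fun y : ℝ => g y * y - g y * (y * g y)) b = u * b - u * (b * u) := by
    rw [cfcₙ_sub (fun y : ℝ => g y * y) (fun y : ℝ => g y * (y * g y)) b (hgC.mul hidC)
      (by simp [hg0]) (hgC.mul (hidC.mul hgC)) (by simp [hg0]), h2, h3]
  have hxx : x * star x =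
      cfcₙ (fun y : ℝ => (y - y * g y) - (g y * y - g y * (y * g y))) b := by
    rw [hxs, cfcₙ_sub (fun y : ℝ => y - y * g y) (fun y : ℝ => g y * y - g y * (y * g y)) b
      (hidC.sub (hidC.mul hgC)) (by simp [hg0]) ((hgC.mul hidC).sub (hgC.mul (hidC.mul hgC)))
      (by simp [hg0]), h4, h5]
  -- pointwise bound
  have hbound : ∀ y : ℝ, |(y - y * g y) - (g y * y - g y * (y * g y))| ≤ Real.sqrt t := by
    intro y
    have hden : (0 : ℝ) < y ^ 2 + t := by positivity
    have heq : (y - y * g y) - (g y * y - g y * (y * g y)) = y * t ^ 2 / (y ^ 2 + t) ^ 2 := by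
      rw [hgdef]
      field_simp
      ring
    rw [heq, abs_div, abs_of_pos (by positivity : (0:ℝ) < (y ^ 2 + t) ^ 2),
      div_le_iff₀ (by positivity), abs_mul, abs_of_pos (by positivity : (0:ℝ) < t ^ 2)]
    have hs := Real.sq_sqrt ht.le
    have hsn := Real.sqrt_nonneg t
    have hya : |y| ^ 2 = y ^ 2 := sq_abs y
    rcases le_total |y| (Real.sqrt t) with hc | hc
    · have e1 : t ^ 2 ≤ (y ^ 2 + t) ^ 2 := by
        nlinarith [sq_nonneg (y ^ 2), mul_nonneg (sq_nonneg y) ht.le]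
      calc |y| * t ^ 2 ≤ Real.sqrt t * t ^ 2 := mul_le_mul_of_nonneg_right hc (by positivity)
        _ ≤ Real.sqrt t * (y ^ 2 + t) ^ 2 := mul_le_mul_of_nonneg_left e1 hsn
    · have e2 : t ≤ Real.sqrt t * |y| := by
        calc t = Real.sqrt t * Real.sqrt t := (Real.mul_self_sqrt ht.le).symm
          _ ≤ Real.sqrt t * |y| := mul_le_mul_of_nonneg_left hc hsn
      have e3 : 4 * (y ^ 2 * t) ≤ (y ^ 2 + t) ^ 2 := by nlinarith [sq_nonneg (y ^ 2 - t)]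
      have e2' : t * |y| ≤ Real.sqrt t * y ^ 2 := by
        calc t * |y| ≤ Real.sqrt t * |y| * |y| := mul_le_mul_of_nonneg_right e2 (abs_nonneg y)
          _ = Real.sqrt t * y ^ 2 := by rw [← sq_abs y]; ring
      have e4 : |y| * t ^ 2 ≤ Real.sqrt t * (4 * (y ^ 2 * t)) := by
        calc |y| * t ^ 2 = t * (t * |y|) := by ring
          _ ≤ t * (Real.sqrt t * y ^ 2) := mul_le_mul_of_nonneg_left e2' ht.le
          _ ≤ Real.sqrt t * (4 * (y ^ 2 * t)) := by
              nlinarith [mul_nonneg (mul_nonneg hsn (sq_nonneg y)) ht.le]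
      calc |y| * t ^ 2 ≤ Real.sqrt t * (4 * (y ^ 2 * t)) := e4
        _ ≤ Real.sqrt t * (y ^ 2 + t) ^ 2 := mul_le_mul_of_nonneg_left e3 hsn
  -- conclude
  have hnorm : ‖x‖ * ‖x‖ ≤ Real.sqrt t := by
    rw [← CStarRing.norm_self_mul_star, hxx]
    exact norm_cfcₙ_le fun y _ => by rw [Real.norm_eq_abs]; exact hbound y
  refine ⟨u * a, hright a u hu_mem, ?_⟩
  rw [dist_eq_norm]
  have hxn : ‖a - u * a‖ = ‖x‖ := by rw [hx]
  rw [hxn]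
  nlinarith [norm_nonneg x, htsqrt]


/-- Let `(A, α, ℤ₊^d)` be a C*-dynamical system and `I` a closed two-sided
ideal with `α_j(I) ⊆ I` for all `j ∈ [d]`.  Then for every nonempty `F ⊆ [d]`,
`(⋂_{i∈F} α_i⁻¹(I)) ∩ {a : a·(⋂_{i∈F} α_i⁻¹(I)) ⊆ I} = I`. -/
theorem stmt_7 {A : Type*} [NonUnitalNormedRing A] [StarRing A] [CStarRing A]
    [NormedSpace ℂ A] [IsScalarTower ℂ A A] [SMulCommClass ℂ A A]
    [CompleteSpace A] [StarModule ℂ A]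
    {d : ℕ} (hd : 1 ≤ d) (α : Fin d → (A →⋆ₙₐ[ℂ] A))
    (hcomm : ∀ i j : Fin d, ∀ a : A, α i (α j a) = α j (α i a))
    (I : Set A) (hClosed : IsClosed I) (hIdeal : IsTwoSidedIdealSet I)
    (hInv : ∀ j : Fin d, ∀ x ∈ I, α j x ∈ I) :
    ∀ F : Finset (Fin d), F.Nonempty →
      {a : A | ∀ i ∈ F, α i a ∈ I} ∩
        {a : A | ∀ b : A, (∀ i ∈ F, α i b ∈ I) → a * b ∈ I} = I := by
  letI : NonUnitalCStarAlgebra A :=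
    { ‹NonUnitalNormedRing A›, ‹StarRing A›, ‹CStarRing A›, ‹NormedSpace ℂ A›,
      ‹IsScalarTower ℂ A A›, ‹SMulCommClass ℂ A A›, ‹CompleteSpace A›, ‹StarModule ℂ A› with }
  obtain ⟨-, -, -, hleft, hright⟩ := hIdeal
  -- `I` is hereditary and self-adjoint
  have hher : ∀ c : A, c * star c ∈ I → c ∈ I := fun c hc =>
    closed_ideal_hereditary' I hClosed hleft hright hc
  have hstar : ∀ x ∈ I, star x ∈ I := by
    intro x hx
    refine hher (star x) ?_
    rw [star_star]
    exact hleft (star x) x hx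
  intro F hF
  apply Set.eq_of_subset_of_subset
  · rintro a ⟨h1, h2⟩
    refine hher a (h2 (star a) fun i hi => ?_)
    rw [map_star]
    exact hstar _ (h1 i hi)
  · intro a ha
    refine ⟨fun i _ => hInv i a ha, fun b _ => hright b a ha⟩
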